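/- Let c be a positive even integer and let α be a real number with √2 ≤ α ≤ 1.563. Then the scaled ReLU function σ_sr(x; c) = max(c·x, 0) is not uniformly approximable by polynomials with integer coefficients on the interval [-α, α]: there exists ε > 0 such that for every polynomial p with integer coefficients there is some x ∈ [-α, α] with |max(c·x, 0) - p(x)| > ε. -/

import Mathlib

/-- For a positive even integer `c` and `√2 ≤ α ≤ 1.563`, the scaled ReLU function
`x ↦ max (c·x) 0` is not uniformly approximable by polynomials with integer coefficients
on `[-α, α]`. -/
theorem scaled_relu_not_integer_poly_approximable_on_sqrt2_interval
    (c : ℤ) (hcpos : 0 < c) (hceven : Even c) (α : ℝ)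
    (hα₁ : Real.sqrt 2 ≤ α) (hα₂ : α ≤ 1.563) :
    ∃ ε : ℝ, ε > 0 ∧ ∀ p : Polynomial ℤ,
      ∃ x ∈ Set.Icc (-α) α, |max ((c : ℝ) * x) 0 - Polynomial.aeval x p| > ε := by
  set s : ℝ := Real.sqrt 2 with hs
  have hs2 : s * s = ((2 : ℤ) : ℝ) := by
    push_cast; exact Real.mul_self_sqrt (by norm_num)
  set φ : (ℤ√2) →+* ℝ := Zsqrtd.lift ⟨s, hs2⟩ with hφ
  have hirr : Irrational ((c : ℝ) * s) := by
    exact_mod_cast irrational_sqrt_two.intCast_mul hcpos.ne'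
  set δ : ℝ := |(c : ℝ) * s - round ((c : ℝ) * s)| with hδdef
  have hδ : 0 < δ := by
    rw [hδdef, abs_pos, sub_ne_zero]
    exact hirr.ne_int _
  refine ⟨δ / 3, by positivity, fun p => ?_⟩
  by_contra hcon
  push_neg at hcon
  have hs0 : 0 ≤ s := Real.sqrt_nonneg 2
  have hα0 : 0 ≤ α := le_trans hs0 hα₁
  have h1 := hcon s ⟨by linarith, hα₁⟩
  have h2 := hcon (-s) ⟨by linarith, by linarith⟩
  have hc0 : (0 : ℝ) < (c : ℝ) := by exact_mod_cast hcpos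
  have e1 : max ((c : ℝ) * s) 0 = (c : ℝ) * s := max_eq_left (by positivity)
  have e2 : max ((c : ℝ) * (-s)) 0 = 0 := max_eq_right (by nlinarith)
  rw [e1] at h1
  rw [e2] at h2
  set z : ℤ√2 := Polynomial.aeval (Zsqrtd.sqrtd : ℤ√2) p with hz
  have hφs : φ (Zsqrtd.sqrtd : ℤ√2) = s := by
    simp [hφ, Zsqrtd.lift_apply_apply]
  have hps : Polynomial.aeval s p = φ z := by
    rw [← hφs, hz]
    exact Polynomial.aeval_algHom_apply φ.toIntAlgHom _ p
  have hpns : Polynomial.aeval (-s) p = φ (star z) := by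
    have h3 : star z = Polynomial.aeval (star (Zsqrtd.sqrtd : ℤ√2)) p := by
      rw [hz]
      exact (Polynomial.aeval_algHom_apply (starRingEnd (ℤ√2)).toIntAlgHom _ p).symm
    have h4 : star (Zsqrtd.sqrtd : ℤ√2) = -Zsqrtd.sqrtd := by
      ext <;> simp [Zsqrtd.sqrtd]
    have h5 : φ.toIntAlgHom (-(Zsqrtd.sqrtd : ℤ√2)) = -s := by
      simp [RingHom.toIntAlgHom_apply, hφs]
    rw [h3, h4]
    calc Polynomial.aeval (-s) p
        = Polynomial.aeval (φ.toIntAlgHom (-(Zsqrtd.sqrtd : ℤ√2))) p := by rw [h5]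
      _ = φ.toIntAlgHom (Polynomial.aeval (-(Zsqrtd.sqrtd : ℤ√2)) p) :=
          Polynomial.aeval_algHom_apply _ _ p
      _ = φ (Polynomial.aeval (-(Zsqrtd.sqrtd : ℤ√2)) p) := rfl
  have hsum : φ z + φ (star z) = ((2 * z.re : ℤ) : ℝ) := by
    simp [hφ, Zsqrtd.lift_apply_apply]
    push_cast
    ring
  have hkey : δ ≤ |(c : ℝ) * s - ((2 * z.re : ℤ) : ℝ)| := round_le _ _
  have hdist : |(c : ℝ) * s - ((2 * z.re : ℤ) : ℝ)| ≤ 2 * (δ / 3) := by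
    have : (c : ℝ) * s - ((2 * z.re : ℤ) : ℝ) =
        ((c : ℝ) * s - Polynomial.aeval s p) + (0 - Polynomial.aeval (-s) p) := by
      rw [hps, hpns, ← hsum]; ring
    rw [this]
    calc |((c : ℝ) * s - Polynomial.aeval s p) + (0 - Polynomial.aeval (-s) p)|
        ≤ |(c : ℝ) * s - Polynomial.aeval s p| + |0 - Polynomial.aeval (-s) p| := abs_add_le _ _
      _ ≤ δ / 3 + δ / 3 := add_le_add h1 h2
      _ = 2 * (δ / 3) := by ring
  linarith
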